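/- Let P = {x_α : α < 𝔠} and Q = {y_n : n ∈ ℕ}, Y = P × Q, and X = Y ∪ P ∪ {p} topologized so that points of Y are isolated, basic neighbourhoods of x_α are U_{x_α}(n) = {x_α} ∪ {(x_α,y_m) : m > n}, and basic neighbourhoods of p are U_p(A) = {p} ∪ {(x_α,y_n) : x_α ∈ P∖A, n ∈ ℕ} for countable A ⊆ P. Then X is not star-K-Scheepers. -/
import Mathlib


open Set

/-- Star of a set `A` with respect to a family `P`: `St(A,P) = ⋃{B ∈ P : A ∩ B ≠ ∅}`. -/
def st {X : Type*} (A : Set X) (P : Set (Set X)) : Set X :=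
  ⋃₀ {B | B ∈ P ∧ (A ∩ B).Nonempty}

/-- `U` is an open cover of the space. -/
def IsOpenCover {X : Type*} [TopologicalSpace X] (U : Set (Set X)) : Prop :=
  (∀ V ∈ U, IsOpen V) ∧ ⋃₀ U = Set.univ

/-- An ω-cover: an open cover such that every finite subset lies in some member. -/
def IsOmegaCover {X : Type*} [TopologicalSpace X] (U : Set (Set X)) : Prop :=
  IsOpenCover U ∧ ∀ F : Set X, F.Finite → ∃ V ∈ U, F ⊆ V

/-- The star-K-Scheepers property. -/
def StarKScheepers (X : Type*) [TopologicalSpace X] : Prop :=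
  ∀ U : ℕ → Set (Set X), (∀ n, IsOpenCover (U n)) →
    ∃ K : ℕ → Set X, (∀ n, IsCompact (K n)) ∧
      IsOmegaCover {S | ∃ n, S = st (K n) (U n)}

/-- The space of Example 3.5: points of `α × ℕ` (= `Y`) are isolated, a point `a : α`
(= `x_a ∈ P`) has basic neighbourhoods `{x_a} ∪ {(x_a, y_m) : m > n}`, and the extra
point `p` has basic neighbourhoods `{p} ∪ {(x_a, y_n) : x_a ∉ A, n ∈ ℕ}` for countable
`A ⊆ α`. -/
def ExampleTopology (α : Type*) : TopologicalSpace ((α × ℕ) ⊕ (α ⊕ Unit)) where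
  IsOpen S :=
    (∀ a : α, Sum.inr (Sum.inl a) ∈ S → ∃ n : ℕ, ∀ m > n, Sum.inl (a, m) ∈ S) ∧
    (Sum.inr (Sum.inr ()) ∈ S → ∃ A : Set α, A.Countable ∧
      ∀ a ∉ A, ∀ n : ℕ, Sum.inl (a, n) ∈ S)
  isOpen_univ :=
    ⟨fun _ _ => ⟨0, fun _ _ => trivial⟩,
     fun _ => ⟨∅, Set.countable_empty, fun _ _ _ => trivial⟩⟩
  isOpen_inter := fun s t hs ht => by
    refine ⟨fun a ha => ?_, fun hp => ?_⟩
    · obtain ⟨n, hn⟩ := hs.1 a ha.1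
      obtain ⟨n', hn'⟩ := ht.1 a ha.2
      exact ⟨max n n', fun m hm =>
        ⟨hn m (lt_of_le_of_lt (le_max_left _ _) hm),
         hn' m (lt_of_le_of_lt (le_max_right _ _) hm)⟩⟩
    · obtain ⟨A, hA, h1⟩ := hs.2 hp.1
      obtain ⟨A', hA', h2⟩ := ht.2 hp.2
      exact ⟨A ∪ A', hA.union hA', fun a haA n =>
        ⟨h1 a (fun hh => haA (Or.inl hh)) n, h2 a (fun hh => haA (Or.inr hh)) n⟩⟩
  isOpen_sUnion := fun 𝒮 h => by
    refine ⟨fun a ha => ?_, fun hp => ?_⟩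
    · obtain ⟨t, ht, hat⟩ := ha
      obtain ⟨n, hn⟩ := (h t ht).1 a hat
      exact ⟨n, fun m hm => ⟨t, ht, hn m hm⟩⟩
    · obtain ⟨t, ht, hpt⟩ := hp
      obtain ⟨A, hA, h1⟩ := (h t ht).2 hpt
      exact ⟨A, hA, fun a haA n => ⟨t, ht, h1 a haA n⟩⟩

namespace Ex35

variable {α : Type*}

/-- Abbreviation for the underlying type of the example space. -/
abbrev X (α : Type*) := (α × ℕ) ⊕ (α ⊕ Unit)

/-- The basic open set `U_{x_a} = {x_a} ∪ {(x_a, y_n) : n ∈ ℕ}`. -/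
def Ua (a : α) : Set (X α) :=
  {z | z = Sum.inr (Sum.inl a) ∨ ∃ n : ℕ, z = Sum.inl (a, n)}

/-- The basic open set `U_p(∅) = {p} ∪ Y`. -/
def Up : Set (X α) :=
  {z | z = Sum.inr (Sum.inr ()) ∨ ∃ (a : α) (n : ℕ), z = Sum.inl (a, n)}

/-- The fixed open cover used in the proof. -/
def Cov : Set (Set (X α)) := Set.range Ua ∪ {Up}

lemma isOpen_iff (S : Set (X α)) :
    @IsOpen _ (ExampleTopology α) S ↔
      ((∀ a : α, Sum.inr (Sum.inl a) ∈ S → ∃ n : ℕ, ∀ m > n, Sum.inl (a, m) ∈ S) ∧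
       (Sum.inr (Sum.inr ()) ∈ S → ∃ A : Set α, A.Countable ∧
         ∀ a ∉ A, ∀ n : ℕ, Sum.inl (a, n) ∈ S)) := Iff.rfl

lemma isOpen_Ua (a : α) : @IsOpen _ (ExampleTopology α) (Ua a) := by
  rw [isOpen_iff]
  constructor
  · intro b hb
    rcases hb with hb | ⟨n, hn⟩
    · obtain rfl : b = a := by
        simpa using hb
      exact ⟨0, fun m _ => Or.inr ⟨m, rfl⟩⟩
    · simp at hn
  · intro hp
    rcases hp with hp | ⟨a', n, hn⟩ <;> simp_all

lemma isOpen_Up : @IsOpen _ (ExampleTopology α) (Up : Set (X α)) := by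
  rw [isOpen_iff]
  constructor
  · intro b hb
    rcases hb with hb | ⟨a', n, hn⟩ <;> simp_all
  · intro _
    exact ⟨∅, Set.countable_empty, fun a _ n => Or.inr ⟨a, n, rfl⟩⟩

lemma cov_isOpenCover : @IsOpenCover (X α) (ExampleTopology α) Cov := by
  constructor
  · intro V hV
    rcases hV with ⟨a, rfl⟩ | hV
    · exact isOpen_Ua a
    · simp only [Set.mem_singleton_iff] at hV
      subst hV; exact isOpen_Up
  · ext z
    simp only [Set.mem_univ, iff_true, Set.mem_sUnion]
    rcases z with ⟨a, n⟩ | (a | u)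
    · exact ⟨Ua a, Or.inl ⟨a, rfl⟩, Or.inr ⟨n, rfl⟩⟩
    · exact ⟨Ua a, Or.inl ⟨a, rfl⟩, Or.inl rfl⟩
    · exact ⟨Up, Or.inr rfl, Or.inl (by simp)⟩

/-- Membership in `Ua a` determines `a`. -/
lemma Ua_coord {a b : α} {z : X α} (ha : z ∈ Ua a) (hb : z ∈ Ua b) : a = b := by
  rcases ha with ha | ⟨n, rfl⟩
  · subst ha
    rcases hb with hb | ⟨m, hm⟩ <;> simp_all
  · rcases hb with hb | ⟨m, hm⟩ <;> simp_all

/-- A compact subset of the example space meets only finitely many of the sets `Ua a`. -/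
lemma key (K : Set (X α)) (hK : @IsCompact _ (ExampleTopology α) K) :
    {a : α | (K ∩ Ua a).Nonempty}.Finite := by
  letI := ExampleTopology α
  by_contra hfin
  have hinf : {a : α | (K ∩ Ua a).Nonempty}.Infinite := hfin
  obtain f := hinf.natEmbedding
  -- witnesses
  have hz : ∀ i : ℕ, ∃ z : X α, z ∈ K ∧ z ∈ Ua ((f i : α)) := by
    intro i
    obtain ⟨z, hz1, hz2⟩ := (f i).2
    exact ⟨z, hz1, hz2⟩
  choose z hzK hzU using hz
  -- the neighbourhood assignment
  let N : X α → Set (X α) := fun x =>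
    match x with
    | Sum.inl y => {Sum.inl y}
    | Sum.inr (Sum.inl b) =>
        {w | w = Sum.inr (Sum.inl b) ∨
          ∃ m : ℕ, (∀ i : ℕ, z i ≠ Sum.inl (b, m)) ∧ w = Sum.inl (b, m)}
    | Sum.inr (Sum.inr _) =>
        {w | w = Sum.inr (Sum.inr ()) ∨
          ∃ (a : α) (n : ℕ), (∀ i : ℕ, (f i : α) ≠ a) ∧ w = Sum.inl (a, n)}
  have hNopen : ∀ x : X α, IsOpen (N x) := by
    intro x
    rcases x with y | (b | u)
    · rw [isOpen_iff]
      constructor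
      · intro a ha; simp [N] at ha
      · intro hp; simp [N] at hp
    · rw [isOpen_iff]
      constructor
      · intro c hc
        have hcb : c = b := by
          rcases hc with hc | ⟨m, _, hm⟩
          · simpa using hc
          · simp at hm
        subst hcb
        by_cases hE : ∃ (i : ℕ) (m : ℕ), z i = Sum.inl (c, m)
        · obtain ⟨i0, m0, hi0⟩ := hE
          refine ⟨m0, fun m hm => Or.inr ⟨m, fun j hj => ?_, rfl⟩⟩
          have h1 : (f j : α) = c := by
            rcases hzU j with h | ⟨n', hn'⟩
            · rw [hj] at h; simp at h
            · rw [hj] at hn'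
              have := Sum.inl.inj hn'
              exact (Prod.mk.inj this).1.symm
          have h2 : (f i0 : α) = c := by
            rcases hzU i0 with h | ⟨n', hn'⟩
            · rw [hi0] at h; simp at h
            · rw [hi0] at hn'
              have := Sum.inl.inj hn'
              exact (Prod.mk.inj this).1.symm
          have : i0 = j := by
            have : f i0 = f j := Subtype.ext (h2.trans h1.symm)
            exact f.injective this
          subst this
          rw [hi0] at hj
          have := Sum.inl.inj hj
          have : m0 = m := (Prod.mk.inj this).2
          omega
        · push_neg at hE
          exact ⟨0, fun m _ => Or.inr ⟨m, fun i => hE i m, rfl⟩⟩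
      · intro hp
        rcases hp with hp | ⟨m, _, hm⟩ <;> simp_all
    · rw [isOpen_iff]
      constructor
      · intro c hc
        rcases hc with hc | ⟨a, n, _, hn⟩ <;> simp_all
      · intro _
        refine ⟨Set.range (fun i => (f i : α)), Set.countable_range _, fun a ha n => ?_⟩
        refine Or.inr ⟨a, n, fun i hi => ha ⟨i, hi⟩, rfl⟩
  have hmemN : ∀ x : X α, x ∈ N x := by
    intro x
    rcases x with y | (b | u)
    · exact rfl
    · exact Or.inl rfl
    · exact Or.inl rfl
  have hsub : ∀ (x : X α) (i : ℕ), z i ∈ N x → z i = x := by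
    intro x i hi
    rcases x with y | (b | u)
    · simpa [N] using hi
    · rcases hi with hi | ⟨m, hm, heq⟩
      · exact hi
      · exact absurd heq (hm i)
    · rcases hi with hi | ⟨a, n, ha, heq⟩
      · rcases hzU i with h | ⟨n', hn'⟩
        · rw [hi] at h; simp at h
        · rw [hi] at hn'; simp at hn'
      · have : (f i : α) = a := by
          rcases hzU i with h | ⟨n', hn'⟩
          · rw [heq] at h; simp at h
          · rw [heq] at hn'
            have := Sum.inl.inj hn'
            exact (Prod.mk.inj this).1.symm
        exact absurd this (ha i)
  have hcover : K ⊆ ⋃ x : X α, N x := fun x _ => Set.mem_iUnion.mpr ⟨x, hmemN x⟩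
  obtain ⟨t, ht⟩ := hK.elim_finite_subcover N hNopen hcover
  -- z is injective with range inside ↑t
  have hrange : Set.range z ⊆ ↑t := by
    rintro _ ⟨i, rfl⟩
    have := ht (hzK i)
    simp only [Set.mem_iUnion] at this
    obtain ⟨x, hx, hmem⟩ := this
    rwa [hsub x i hmem]
  have hzinj : Function.Injective z := by
    intro i j hij
    have : (f i : α) = (f j : α) := Ua_coord (hzU i) (hij ▸ hzU j)
    exact f.injective (Subtype.ext this)
  exact (Set.infinite_range_of_injective hzinj) (t.finite_toSet.subset hrange)

end Ex35

/-- The space `X = Y ∪ P ∪ {p}` of Example 3.5 (with `|P| = 𝔠`) is not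
star-K-Scheepers. -/
theorem example_not_starKScheepers {α : Type*}
    (hα : Cardinal.mk α = Cardinal.continuum) :
    ¬ @StarKScheepers ((α × ℕ) ⊕ (α ⊕ Unit)) (ExampleTopology α) := by
  letI := ExampleTopology α
  intro H
  obtain ⟨K, hKc, hω⟩ := H (fun _ => Ex35.Cov) (fun _ => Ex35.cov_isOpenCover)
  have hT : ∀ n, {a : α | (K n ∩ Ex35.Ua a).Nonempty}.Finite :=
    fun n => Ex35.key (K n) (hKc n)
  have hcnt : (⋃ n, {a : α | (K n ∩ Ex35.Ua a).Nonempty}).Countable :=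
    Set.countable_iUnion fun n => (hT n).countable
  have huncnt : ¬ (Set.univ : Set α).Countable := by
    rw [Set.countable_univ_iff, ← Cardinal.mk_le_aleph0_iff, hα]
    exact not_le.mpr Cardinal.aleph0_lt_continuum
  have : ∃ a : α, a ∉ ⋃ n, {a : α | (K n ∩ Ex35.Ua a).Nonempty} := by
    by_contra h
    push_neg at h
    exact huncnt (hcnt.mono (fun a _ => h a))
  obtain ⟨a, ha⟩ := this
  simp only [Set.mem_iUnion, Set.mem_setOf_eq, not_exists] at ha
  obtain ⟨V, hV, hFV⟩ := hω.2 {Sum.inr (Sum.inl a)} (Set.finite_singleton _)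
  obtain ⟨n, rfl⟩ := hV
  have hxa : (Sum.inr (Sum.inl a) : Ex35.X α) ∈ st (K n) Ex35.Cov :=
    hFV rfl
  obtain ⟨B, ⟨hBmem, hBne⟩, hxB⟩ := hxa
  rcases hBmem with ⟨b, rfl⟩ | hB
  · have : b = a := by
      rcases hxB with h | ⟨m, hm⟩
      · exact (by simpa using h : a = b).symm
      · simp at hm
    subst this
    exact ha n hBne
  · simp only [Set.mem_singleton_iff] at hB
    subst hB
    rcases hxB with h | ⟨a', m, hm⟩ <;> simp_all [Ex35.Up]
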